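/- Let (X, ‖·‖) be a real Banach space and let T : X → X be an enriched Kannan contraction: there exist b ∈ [0,∞) and α ∈ [0, 1/2) such that ‖b(u−v) + Tu − Tv‖ ≤ α(‖u − Tu‖ + ‖v − Tv‖) for all u, v ∈ X with u ≠ v. Then the fixed point problem for T is well-posed: T has a unique fixed point p ∈ X, and for every sequence (u_n) in X with ‖u_n − T u_n‖ → 0 as n → ∞, one has ‖u_n − p‖ → 0 as n → ∞. -/

import Mathlib

set_option maxHeartbeats 1000000 in
/-- The fixed point problem of an enriched Kannan contraction on a real Banach space
is well-posed. -/
theorem enriched_kannan_contraction_wellPosed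
    {X : Type*} [NormedAddCommGroup X] [NormedSpace ℝ X] [CompleteSpace X]
    (T : X → X) (b α : ℝ) (hb : 0 ≤ b) (hα0 : 0 ≤ α) (hα : α < 1 / 2)
    (hT : ∀ u v : X, u ≠ v →
      ‖b • (u - v) + T u - T v‖ ≤ α * (‖u - T u‖ + ‖v - T v‖)) :
    ∃ p : X, (T p = p ∧ ∀ q : X, T q = q → q = p) ∧
      ∀ u : ℕ → X,
        Filter.Tendsto (fun n => ‖u n - T (u n)‖) Filter.atTop (nhds 0) →
        Filter.Tendsto (fun n => ‖u n - p‖) Filter.atTop (nhds 0) := by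
  -- the averaged map
  set c : ℝ := (b + 1)⁻¹ with hc_def
  have hb1 : (0:ℝ) < b + 1 := by linarith
  have hc : 0 < c := inv_pos.mpr hb1
  have hc1 : c ≤ 1 := by
    have h1 : c * (b + 1) = 1 := inv_mul_cancel₀ hb1.ne'
    nlinarith
  set S : X → X := fun x => x + c • (T x - x) with hS_def
  have key1 : ∀ x : X, x - S x = c • (x - T x) := by
    intro x
    simp only [hS_def]
    rw [smul_sub, smul_sub]
    abel
  have key2 : ∀ x y : X, S x - S y = c • (b • (x - y) + T x - T y) := by
    intro x y
    have hcb : 1 - c = c * b := by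
      have h1 : c * (b + 1) = 1 := inv_mul_cancel₀ hb1.ne'
      linarith
    simp only [hS_def]
    match_scalars <;> nlinarith [hcb]
  have hS : ∀ x y : X, x ≠ y → ‖S x - S y‖ ≤ α * (‖x - S x‖ + ‖y - S y‖) := by
    intro x y hxy
    rw [key2, key1, key1, norm_smul, norm_smul, norm_smul,
      Real.norm_of_nonneg hc.le]
    calc c * ‖b • (x - y) + T x - T y‖ ≤ c * (α * (‖x - T x‖ + ‖y - T y‖)) := by
          exact mul_le_mul_of_nonneg_left (hT x y hxy) hc.le
      _ = α * (c * ‖x - T x‖ + c * ‖y - T y‖) := by ring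
  -- fixed points of S and T coincide
  have hfix : ∀ x : X, S x = x ↔ T x = x := by
    intro x
    constructor
    · intro h
      have : x - S x = 0 := by rw [h, sub_self]
      rw [key1] at this
      have := (smul_eq_zero.mp this).resolve_left (ne_of_gt hc)
      have : x = T x := by rwa [sub_eq_zero] at this
      exact this.symm
    · intro h
      simp [hS_def, h]
  set r : ℝ := α / (1 - α) with hr_def
  have h1α : (0:ℝ) < 1 - α := by linarith
  have hr0 : 0 ≤ r := div_nonneg hα0 h1α.le
  have hr1 : r < 1 := by
    rw [hr_def, div_lt_one h1α]; linarith
  -- the iteration sequence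
  set x : ℕ → X := fun n => S^[n] 0 with hx_def
  have hxsucc : ∀ n, x (n + 1) = S (x n) := by
    intro n; simp [hx_def, Function.iterate_succ_apply']
  have hdstep : ∀ n, ‖x (n+1) - x (n+2)‖ ≤ r * ‖x n - x (n+1)‖ := by
    intro n
    by_cases h : x n = x (n+1)
    · have : x (n+1) = x (n+2) := by rw [hxsucc n, hxsucc (n+1), h]
      rw [this, sub_self, norm_zero]
      exact mul_nonneg hr0 (norm_nonneg _)
    · have := hS (x n) (x (n+1)) h
      rw [← hxsucc n, ← hxsucc (n+1)] at this
      rw [hr_def, div_mul_eq_mul_div, le_div_iff₀ h1α]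
      nlinarith [norm_nonneg (x (n+1) - x (n+2))]
  have hdgeo : ∀ n, ‖x n - x (n+1)‖ ≤ ‖x 0 - x 1‖ * r ^ n := by
    intro n
    induction n with
    | zero => simp
    | succ k ih =>
      calc ‖x (k+1) - x (k+2)‖ ≤ r * ‖x k - x (k+1)‖ := hdstep k
        _ ≤ r * (‖x 0 - x 1‖ * r ^ k) := mul_le_mul_of_nonneg_left ih hr0
        _ = ‖x 0 - x 1‖ * r ^ (k+1) := by ring
  have hcauchy : CauchySeq x := by
    apply cauchySeq_of_le_geometric r (‖x 0 - x 1‖) hr1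
    intro n
    rw [dist_eq_norm]
    exact hdgeo n
  obtain ⟨p, hp⟩ := cauchySeq_tendsto_of_complete hcauchy
  -- auxiliary limits
  have hd0 : Filter.Tendsto (fun n => ‖x n - x (n+1)‖) Filter.atTop (nhds 0) := by
    have hgeo : Filter.Tendsto (fun n : ℕ => ‖x 0 - x 1‖ * r ^ n) Filter.atTop (nhds 0) := by
      have := tendsto_pow_atTop_nhds_zero_of_lt_one hr0 hr1
      simpa using this.const_mul (‖x 0 - x 1‖)
    exact squeeze_zero (fun n => norm_nonneg _) hdgeo hgeo
  have hpx : Filter.Tendsto (fun n => ‖p - x (n+1)‖) Filter.atTop (nhds 0) := by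
    have h1 : Filter.Tendsto (fun n => ‖x n - p‖) Filter.atTop (nhds 0) :=
      tendsto_iff_norm_sub_tendsto_zero.mp hp
    have h2 : Filter.Tendsto (fun n => ‖x (n+1) - p‖) Filter.atTop (nhds 0) :=
      h1.comp (Filter.tendsto_add_atTop_nat 1)
    simpa [norm_sub_rev] using h2
  -- p is a fixed point of S
  have hSp : S p = p := by
    have claim : ∀ n, (1 - α) * ‖p - S p‖ ≤ ‖p - x (n+1)‖ + ‖x n - x (n+1)‖ := by
      intro n
      by_cases h : x n = p
      · have h2 : ‖p - S p‖ = ‖x n - x (n+1)‖ := by rw [hxsucc n, h]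
        nlinarith [norm_nonneg (p - x (n+1)), norm_nonneg (p - S p)]
      · have h1 := hS (x n) p h
        rw [← hxsucc n] at h1
        have h2 : ‖p - S p‖ ≤ ‖p - x (n+1)‖ + ‖x (n+1) - S p‖ := by
          have := norm_sub_le_norm_sub_add_norm_sub p (x (n+1)) (S p)
          exact this
        nlinarith [norm_nonneg (x n - x (n+1))]
    have hlim : Filter.Tendsto (fun n => ‖p - x (n+1)‖ + ‖x n - x (n+1)‖)
        Filter.atTop (nhds 0) := by
      simpa using hpx.add hd0
    have : (1 - α) * ‖p - S p‖ ≤ 0 :=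
      le_of_tendsto_of_tendsto' tendsto_const_nhds hlim claim
    have hn : ‖p - S p‖ = 0 := by
      nlinarith [norm_nonneg (p - S p)]
    have : p - S p = 0 := norm_eq_zero.mp hn
    rw [sub_eq_zero] at this
    exact this.symm
  have hTp : T p = p := (hfix p).mp hSp
  refine ⟨p, ⟨hTp, ?_⟩, ?_⟩
  · -- uniqueness
    intro q hq
    by_contra hne
    have h := hT q p hne
    rw [hq, hTp] at h
    simp only [sub_self, norm_zero, add_zero, mul_zero] at h
    have heq : b • (q - p) + q - p = (b + 1) • (q - p) := by
      rw [add_smul, one_smul]; abel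
    rw [heq, norm_smul, Real.norm_of_nonneg hb1.le] at h
    have h0 : (b + 1) * ‖q - p‖ ≤ (b + 1) * 0 := by simpa using h
    have : ‖q - p‖ ≤ 0 := le_of_mul_le_mul_left h0 hb1
    have : q - p = 0 := norm_eq_zero.mp (le_antisymm this (norm_nonneg _))
    exact hne (sub_eq_zero.mp this)
  · -- well-posedness
    intro u hu
    have bound : ∀ n, ‖u n - p‖ ≤ (1 + α) * ‖u n - T (u n)‖ := by
      intro n
      by_cases h : u n = p
      · rw [h, sub_self, norm_zero]
        positivity
      · have h1 := hS (u n) p h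
        rw [hSp] at h1
        simp only [sub_self, norm_zero, add_zero] at h1
        have h2 : ‖u n - p‖ ≤ ‖u n - S (u n)‖ + ‖S (u n) - p‖ :=
          norm_sub_le_norm_sub_add_norm_sub (u n) (S (u n)) p
        have h3 : ‖u n - S (u n)‖ = c * ‖u n - T (u n)‖ := by
          rw [key1, norm_smul, Real.norm_of_nonneg hc.le]
        have h4 : ‖u n - S (u n)‖ ≤ ‖u n - T (u n)‖ := by
          rw [h3]
          exact mul_le_of_le_one_left (norm_nonneg _) hc1
        nlinarith [norm_nonneg (u n - T (u n))]
    have hub : Filter.Tendsto (fun n => (1 + α) * ‖u n - T (u n)‖) Filter.atTop (nhds 0) := by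
      simpa using hu.const_mul (1 + α)
    exact squeeze_zero (fun n => norm_nonneg _) bound hub
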